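/- For real matrix systems R₁,…,R_m on ℂ^{n₁},…,ℂ^{n_m}, the density matrices of the direct sum satisfy D(R₁ ⊕ … ⊕ R_m) = conv(D(R₁) ∪ … ∪ D(R_m)) (direct convex sum under block-diagonal embeddings), and the positive cones and dual cones are the direct sums of those of the summands. -/

import Mathlib

open Matrix ComplexOrder

/-- The positive cone `C(R)` of a real matrix system `R`. -/
def cone {ι : Type*} [Fintype ι] (R : Set (Matrix ι ι ℂ)) : Set (Matrix ι ι ℂ) :=
  {A | A ∈ R ∧ A.PosSemidef}

/-- The dual cone `C(R)^∨` inside the hermitian part of `R`, w.r.t. `Re tr(A*B)`. -/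
def dualCone {ι : Type*} [Fintype ι] (R : Set (Matrix ι ι ℂ)) : Set (Matrix ι ι ℂ) :=
  {A | A ∈ R ∧ Aᴴ = A ∧ ∀ B ∈ R, B.PosSemidef → 0 ≤ ((A * B).trace).re}

/-- The density matrices `D(R)` of a real matrix system `R`. -/
def dmat {ι : Type*} [Fintype ι] (R : Set (Matrix ι ι ℂ)) : Set (Matrix ι ι ℂ) :=
  {ρ | ρ ∈ dualCone R ∧ ρ.trace = 1}

variable {ι : Type*} [Fintype ι]

/-- Hermitian + real quadratic form nonneg implies PSD over ℂ. -/
lemma psd_of_herm_re {M : Matrix ι ι ℂ} (hM : Mᴴ = M)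
    (h : ∀ x : ι → ℂ, 0 ≤ (star x ⬝ᵥ (M *ᵥ x)).re) : M.PosSemidef := by
  refine Matrix.PosSemidef.of_dotProduct_mulVec_nonneg hM fun x => ?_
  have hsa : (starRingEnd ℂ) (star x ⬝ᵥ (M *ᵥ x)) = star x ⬝ᵥ (M *ᵥ x) := by
    calc (starRingEnd ℂ) (star x ⬝ᵥ (M *ᵥ x)) = star (star x ⬝ᵥ (M *ᵥ x)) := rfl
    _ = star (M *ᵥ x) ⬝ᵥ x := by rw [← star_dotProduct_star (M *ᵥ x) (star x), star_star]
    _ = (star x ᵥ* Mᴴ) ⬝ᵥ x := by rw [star_mulVec]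
    _ = star x ⬝ᵥ (Mᴴ *ᵥ x) := (dotProduct_mulVec _ _ _).symm
    _ = star x ⬝ᵥ (M *ᵥ x) := by rw [hM]
  rw [Complex.le_def]
  exact ⟨by simpa using h x, by
    have := Complex.conj_eq_iff_im.mp hsa; simp [this]⟩

lemma quad_bound (A : Matrix ι ι ℂ) (x : ι → ℂ) :
    (star x ⬝ᵥ (A *ᵥ x)).re ≤ (∑ i, ∑ j, ‖(A i j)‖) * (star x ⬝ᵥ x).re := by
  classical
  have hS : (star x ⬝ᵥ x).re = ∑ k, Complex.normSq (x k) := by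
    simp [dotProduct, Complex.normSq_apply, Complex.mul_re]
  set S := (star x ⬝ᵥ x).re with hSdef
  have hSnn : ∀ k, Complex.normSq (x k) ≤ S := by
    intro k
    rw [hS]
    exact Finset.single_le_sum (fun i _ => Complex.normSq_nonneg _) (Finset.mem_univ k)
  have expand : star x ⬝ᵥ (A *ᵥ x) = ∑ i, ∑ j, (starRingEnd ℂ) (x i) * A i j * x j := by
    simp [dotProduct, mulVec, Finset.mul_sum, mul_assoc]
  calc (star x ⬝ᵥ (A *ᵥ x)).re ≤ ‖(star x ⬝ᵥ (A *ᵥ x))‖ := Complex.re_le_norm _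
    _ ≤ ∑ i, ∑ j, ‖((starRingEnd ℂ) (x i) * A i j * x j)‖ := by
        rw [expand]
        exact (norm_sum_le _ _).trans (Finset.sum_le_sum
          (fun i _ => norm_sum_le _ _))
    _ ≤ ∑ i, ∑ j, ‖(A i j)‖ * S := by
        refine Finset.sum_le_sum fun i _ => Finset.sum_le_sum fun j _ => ?_
        rw [norm_mul, norm_mul, Complex.norm_conj]
        have h1 : ‖(x i)‖ * ‖(x j)‖ ≤ S := by
          nlinarith [hSnn i, hSnn j, Complex.sq_norm (x i), Complex.sq_norm (x j),
            sq_nonneg (‖(x i)‖ - ‖(x j)‖),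
            norm_nonneg (x i), norm_nonneg (x j)]
        calc ‖(x i)‖ * ‖(A i j)‖ * ‖(x j)‖
            = ‖(A i j)‖ * (‖(x i)‖ * ‖(x j)‖) := by ring
          _ ≤ ‖(A i j)‖ * S :=
              mul_le_mul_of_nonneg_left h1 (norm_nonneg _)
    _ = (∑ i, ∑ j, ‖(A i j)‖) * S := by rw [Finset.sum_mul]; congr 1; funext i; rw [Finset.sum_mul]

lemma herm_smul_one_sub_psd [DecidableEq ι] {A : Matrix ι ι ℂ} (hA : Aᴴ = A) :
    (((∑ i, ∑ j, ‖(A i j)‖ : ℝ) : ℂ) • (1 : Matrix ι ι ℂ) - A).PosSemidef := by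
  set c : ℝ := ∑ i, ∑ j, ‖(A i j)‖ with hc
  refine psd_of_herm_re ?_ (fun x => ?_)
  · rw [conjTranspose_sub, conjTranspose_smul, conjTranspose_one, hA]
    simp [Complex.star_def]
  · have h1 : ((c : ℂ) • (1 : Matrix ι ι ℂ) - A) *ᵥ x = (c : ℂ) • x - A *ᵥ x := by
      rw [sub_mulVec, smul_mulVec, one_mulVec]
    rw [h1, dotProduct_sub, dotProduct_smul]
    have := quad_bound A x
    simp only [Complex.sub_re, Complex.smul_re, smul_eq_mul]
    have h2 : ((c : ℂ) * (star x ⬝ᵥ x)).re = c * (star x ⬝ᵥ x).re := by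
      simp
    linarith [this]

lemma trace_herm_sq_re {A : Matrix ι ι ℂ} (hA : Aᴴ = A) :
    ((A * A).trace).re = ∑ i, ∑ j, Complex.normSq (A i j) := by
  classical
  have : A * A = Aᴴ * A := by rw [hA]
  rw [this]
  simp only [trace, diag_apply, mul_apply, conjTranspose_apply, Complex.star_def]
  rw [Complex.re_sum]
  rw [Finset.sum_comm]
  congr 1; funext i
  rw [Complex.re_sum]
  congr 1; funext j
  rw [Complex.normSq_apply, Complex.mul_re]
  simp [Complex.conj_re, Complex.conj_im]

/-- A hermitian member of the dual cone with zero trace is zero. -/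
lemma dual_trace_zero [DecidableEq ι] (R : Submodule ℝ (Matrix ι ι ℂ))
    (h1 : (1 : Matrix ι ι ℂ) ∈ R) {A : Matrix ι ι ℂ} (hAR : A ∈ R) (hAh : Aᴴ = A)
    (hdual : ∀ B ∈ R, B.PosSemidef → 0 ≤ ((A * B).trace).re)
    (htr : A.trace.re = 0) : A = 0 := by
  set c : ℝ := ∑ i, ∑ j, ‖(A i j)‖ with hc
  set B : Matrix ι ι ℂ := ((c : ℝ) : ℂ) • (1 : Matrix ι ι ℂ) - A with hB
  have hBR : B ∈ R := by
    have : B = c • (1 : Matrix ι ι ℂ) - A := by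
      rw [hB]; congr 1
    rw [this]
    exact sub_mem (R.smul_mem c h1) hAR
  have hBpsd : B.PosSemidef := herm_smul_one_sub_psd hAh
  have key := hdual B hBR hBpsd
  have hexp : ((A * B).trace).re = c * A.trace.re - ((A * A).trace).re := by
    rw [hB, Matrix.mul_sub, Matrix.mul_smul, Matrix.mul_one]
    rw [trace_sub, trace_smul]
    simp [Complex.sub_re]
  rw [hexp, htr, mul_zero, zero_sub, le_neg, neg_zero] at key
  rw [trace_herm_sq_re hAh] at key
  have hzero : ∀ i j, Complex.normSq (A i j) = 0 := by
    intro i j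
    have hnn : ∀ i j, (0:ℝ) ≤ Complex.normSq (A i j) := fun _ _ => Complex.normSq_nonneg _
    have := Finset.sum_nonneg (fun i (_ : i ∈ Finset.univ) =>
      Finset.sum_nonneg (fun j (_ : j ∈ Finset.univ) => hnn i j))
    have hsum0 : ∑ i, ∑ j, Complex.normSq (A i j) = 0 := le_antisymm key this
    have h1' := (Finset.sum_eq_zero_iff_of_nonneg (fun i _ =>
      Finset.sum_nonneg (fun j _ => hnn i j))).mp hsum0 i (Finset.mem_univ i)
    exact (Finset.sum_eq_zero_iff_of_nonneg (fun j _ => hnn i j)).mp h1' j (Finset.mem_univ j)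
  ext i j
  simpa using Complex.normSq_eq_zero.mp (hzero i j)

section Block
variable {o : Type*} [Fintype o] [DecidableEq o] {n' : o → Type*} [∀ i, Fintype (n' i)]

lemma mulVec_bd (M : ∀ i, Matrix (n' i) (n' i) ℂ) (x : (Σ i, n' i) → ℂ) (k : o) (i : n' k) :
    (blockDiagonal' M *ᵥ x) ⟨k, i⟩ = (M k *ᵥ fun j => x ⟨k, j⟩) i := by
  simp only [mulVec, dotProduct, ← Finset.univ_sigma_univ, Finset.sum_sigma]
  rw [Fintype.sum_eq_single k]
  · congr 1; funext j; rw [blockDiagonal'_apply_eq]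
  · intro k' hk'
    exact Finset.sum_eq_zero fun j _ => by
      rw [blockDiagonal'_apply_ne _ _ _ (Ne.symm hk'), zero_mul]

lemma dot_bd (M : ∀ i, Matrix (n' i) (n' i) ℂ) (x : (Σ i, n' i) → ℂ) :
    star x ⬝ᵥ (blockDiagonal' M *ᵥ x) =
      ∑ k, (star fun j => x ⟨k, j⟩) ⬝ᵥ (M k *ᵥ fun j => x ⟨k, j⟩) := by
  simp only [dotProduct, ← Finset.univ_sigma_univ, Finset.sum_sigma]
  congr 1; funext k
  congr 1; funext i
  rw [mulVec_bd]
  rfl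

lemma psd_bd_iff (M : ∀ i, Matrix (n' i) (n' i) ℂ) :
    (blockDiagonal' M).PosSemidef ↔ ∀ k, (M k).PosSemidef := by
  constructor
  · intro h k
    have := h.submatrix (Sigma.mk k : n' k → Σ i, n' i)
    convert this using 2
    ext i j
    rw [submatrix_apply, blockDiagonal'_apply_eq]
  · intro h
    refine psd_of_herm_re ?_ (fun x => ?_)
    · rw [blockDiagonal'_conjTranspose]
      exact congrArg _ (funext fun k => (h k).isHermitian)
    · rw [dot_bd, Complex.re_sum]
      exact Finset.sum_nonneg fun k _ => (Complex.le_def.mp ((h k).dotProduct_mulVec_nonneg _)).1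
end Block

lemma trace_bd_mul {o : Type*} [Fintype o] [DecidableEq o] {n' : o → Type*}
    [∀ i, Fintype (n' i)] (A B : ∀ i, Matrix (n' i) (n' i) ℂ) :
    (blockDiagonal' A * blockDiagonal' B).trace = ∑ k, (A k * B k).trace := by
  rw [← blockDiagonal'_mul, trace_blockDiagonal']

/-- real trace of hermitian matrix -/
lemma herm_trace_real {A : Matrix ι ι ℂ} (hA : Aᴴ = A) : A.trace = (A.trace.re : ℂ) :=
  (Complex.conj_eq_iff_re.mp (by rw [show ((starRingEnd ℂ) A.trace) = star A.trace from rfl, ← trace_conjTranspose, hA])).symm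

lemma dualCone_smul {ι : Type*} [Fintype ι] (R : Submodule ℝ (Matrix ι ι ℂ)) {A : Matrix ι ι ℂ}
    (hA : A ∈ dualCone (R : Set (Matrix ι ι ℂ))) {r : ℝ} (hr : 0 ≤ r) :
    r • A ∈ dualCone (R : Set (Matrix ι ι ℂ)) := by
  obtain ⟨hAR, hAh, hAd⟩ := hA
  refine ⟨R.smul_mem r hAR, ?_, fun B hB hBpsd => ?_⟩
  · rw [conjTranspose_smul, hAh, star_trivial]
  · rw [smul_mul_assoc, trace_smul]
    have : ((r • (A * B).trace)).re = r * ((A * B).trace).re := by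
      simp [Complex.real_smul]
    rw [this]
    exact mul_nonneg hr (hAd B hB hBpsd)

lemma dualCone_add {ι : Type*} [Fintype ι] (R : Submodule ℝ (Matrix ι ι ℂ))
    {A B : Matrix ι ι ℂ} (hA : A ∈ dualCone (R : Set (Matrix ι ι ℂ)))
    (hB : B ∈ dualCone (R : Set (Matrix ι ι ℂ))) :
    A + B ∈ dualCone (R : Set (Matrix ι ι ℂ)) := by
  obtain ⟨hAR, hAh, hAd⟩ := hA
  obtain ⟨hBR, hBh, hBd⟩ := hB
  refine ⟨R.add_mem hAR hBR, by rw [conjTranspose_add, hAh, hBh], fun C hC hCpsd => ?_⟩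
  rw [add_mul, trace_add, Complex.add_re]
  exact add_nonneg (hAd C hC hCpsd) (hBd C hC hCpsd)

lemma dualCone_zero {ι : Type*} [Fintype ι] (R : Submodule ℝ (Matrix ι ι ℂ)) :
    (0 : Matrix ι ι ℂ) ∈ dualCone (R : Set (Matrix ι ι ℂ)) :=
  ⟨R.zero_mem, conjTranspose_zero, fun B _ _ => by rw [zero_mul, trace_zero]; simp⟩

/-- For real matrix systems `R₁, …, R_m`, the positive cones and dual cones of the
block-diagonal direct sum are the direct sums of those of the summands, and the
density matrices of the direct sum form the direct convex sum
`conv(D(R₁) ∪ … ∪ D(R_m))` under the block-diagonal embeddings. -/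
theorem directSum_cones_and_density (m : ℕ) (n : Fin m → ℕ)
    (R : ∀ i, Submodule ℝ (Matrix (Fin (n i)) (Fin (n i)) ℂ))
    (h1 : ∀ i, (1 : Matrix (Fin (n i)) (Fin (n i)) ℂ) ∈ R i)
    (hstar : ∀ i, ∀ A ∈ R i, Aᴴ ∈ R i)
    (RSum : Set (Matrix (Σ i, Fin (n i)) (Σ i, Fin (n i)) ℂ))
    (hRSum : RSum = {M | ∃ A : ∀ i, Matrix (Fin (n i)) (Fin (n i)) ℂ,
        (∀ i, A i ∈ R i) ∧ M = Matrix.blockDiagonal' A}) :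
    cone RSum = {M | ∃ A : ∀ i, Matrix (Fin (n i)) (Fin (n i)) ℂ,
        (∀ i, A i ∈ cone (R i : Set (Matrix (Fin (n i)) (Fin (n i)) ℂ))) ∧
        M = Matrix.blockDiagonal' A} ∧
    dualCone RSum = {M | ∃ A : ∀ i, Matrix (Fin (n i)) (Fin (n i)) ℂ,
        (∀ i, A i ∈ dualCone (R i : Set (Matrix (Fin (n i)) (Fin (n i)) ℂ))) ∧
        M = Matrix.blockDiagonal' A} ∧
    dmat RSum = convexHull ℝ (⋃ i,
        (fun ρ => Matrix.blockDiagonal' (Pi.single i ρ)) ''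
          dmat (R i : Set (Matrix (Fin (n i)) (Fin (n i)) ℂ))) := by
  classical
  subst hRSum
  -- Part 1
  have part1 : cone {M | ∃ A : ∀ i, Matrix (Fin (n i)) (Fin (n i)) ℂ,
      (∀ i, A i ∈ R i) ∧ M = Matrix.blockDiagonal' A} =
      {M | ∃ A : ∀ i, Matrix (Fin (n i)) (Fin (n i)) ℂ,
        (∀ i, A i ∈ cone (R i : Set (Matrix (Fin (n i)) (Fin (n i)) ℂ))) ∧
        M = Matrix.blockDiagonal' A} := by
    ext M
    constructor
    · rintro ⟨⟨A, hA, rfl⟩, hpsd⟩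
      exact ⟨A, fun i => ⟨hA i, (psd_bd_iff A).mp hpsd i⟩, rfl⟩
    · rintro ⟨A, hA, rfl⟩
      exact ⟨⟨A, fun i => (hA i).1, rfl⟩, (psd_bd_iff A).mpr fun i => (hA i).2⟩
  -- Part 2
  have part2 : dualCone {M | ∃ A : ∀ i, Matrix (Fin (n i)) (Fin (n i)) ℂ,
      (∀ i, A i ∈ R i) ∧ M = Matrix.blockDiagonal' A} =
      {M | ∃ A : ∀ i, Matrix (Fin (n i)) (Fin (n i)) ℂ,
        (∀ i, A i ∈ dualCone (R i : Set (Matrix (Fin (n i)) (Fin (n i)) ℂ))) ∧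
        M = Matrix.blockDiagonal' A} := by
    ext M
    constructor
    · rintro ⟨⟨A, hA, rfl⟩, hherm, hd⟩
      have hAh : ∀ i, (A i)ᴴ = A i := by
        rw [blockDiagonal'_conjTranspose] at hherm
        intro i
        exact congrFun (blockDiagonal'_injective hherm) i
      refine ⟨A, fun i => ⟨hA i, hAh i, fun B hB hBpsd => ?_⟩, rfl⟩
      have hBf : Matrix.blockDiagonal' (Pi.single i B) ∈
          {M | ∃ A : ∀ i, Matrix (Fin (n i)) (Fin (n i)) ℂ,
            (∀ i, A i ∈ R i) ∧ M = Matrix.blockDiagonal' A} := by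
        refine ⟨Pi.single i B, fun j => ?_, rfl⟩
        rcases eq_or_ne j i with rfl | hj
        · rw [Pi.single_eq_same]; exact hB
        · rw [Pi.single_eq_of_ne hj]; exact (R j).zero_mem
      have hBfpsd : (Matrix.blockDiagonal' (Pi.single i B :
          ∀ j, Matrix (Fin (n j)) (Fin (n j)) ℂ)).PosSemidef := by
        refine (psd_bd_iff _).mpr fun j => ?_
        rcases eq_or_ne j i with rfl | hj
        · rw [Pi.single_eq_same]; exact hBpsd
        · rw [Pi.single_eq_of_ne hj]; exact Matrix.PosSemidef.zero
      have key := hd _ hBf hBfpsd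
      rwa [trace_bd_mul, Fintype.sum_eq_single i (fun j hj => by
        rw [Pi.single_eq_of_ne hj, mul_zero, trace_zero]), Pi.single_eq_same] at key
    · rintro ⟨A, hA, rfl⟩
      refine ⟨⟨A, fun i => (hA i).1, rfl⟩, ?_, ?_⟩
      · rw [blockDiagonal'_conjTranspose]
        exact congrArg _ (funext fun i => (hA i).2.1)
      · rintro B ⟨B', hB', rfl⟩ hBpsd
        rw [trace_bd_mul, Complex.re_sum]
        exact Finset.sum_nonneg fun i _ =>
          (hA i).2.2 (B' i) (hB' i) ((psd_bd_iff B').mp hBpsd i)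
  refine ⟨part1, part2, ?_⟩
  -- Part 3
  -- embeddings land in dmat RSum
  have hDsub : ∀ (i : Fin m) (ρ : Matrix (Fin (n i)) (Fin (n i)) ℂ),
      ρ ∈ dmat (R i : Set (Matrix (Fin (n i)) (Fin (n i)) ℂ)) →
      Matrix.blockDiagonal' (Pi.single i ρ) ∈ dmat {M | ∃ A : ∀ i,
        Matrix (Fin (n i)) (Fin (n i)) ℂ, (∀ i, A i ∈ R i) ∧ M = Matrix.blockDiagonal' A} := by
    rintro i ρ ⟨hρd, hρtr⟩
    constructor
    · rw [part2]
      refine ⟨Pi.single i ρ, fun j => ?_, rfl⟩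
      rcases eq_or_ne j i with rfl | hj
      · rw [Pi.single_eq_same]; exact hρd
      · rw [Pi.single_eq_of_ne hj]; exact dualCone_zero (R j)
    · rw [trace_blockDiagonal', Fintype.sum_eq_single i (fun j hj => by
        rw [Pi.single_eq_of_ne hj, trace_zero]), Pi.single_eq_same, hρtr]
  -- convexity of dmat RSum
  have hconv : Convex ℝ (dmat {M | ∃ A : ∀ i,
      Matrix (Fin (n i)) (Fin (n i)) ℂ, (∀ i, A i ∈ R i) ∧ M = Matrix.blockDiagonal' A}) := by
    rintro ρ1 ⟨hρ1, htr1⟩ ρ2 ⟨hρ2, htr2⟩ a b ha hb hab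
    rw [part2] at hρ1 hρ2
    obtain ⟨A1, hA1, rfl⟩ := hρ1
    obtain ⟨A2, hA2, rfl⟩ := hρ2
    constructor
    · rw [part2]
      refine ⟨a • A1 + b • A2, fun i => ?_, ?_⟩
      · exact dualCone_add (R i) (dualCone_smul (R i) (hA1 i) ha)
          (dualCone_smul (R i) (hA2 i) hb)
      · rw [blockDiagonal'_add, blockDiagonal'_smul, blockDiagonal'_smul]
    · rw [trace_add, trace_smul, trace_smul, htr1, htr2]
      simp only [smul_eq_mul, mul_one, Complex.real_smul]
      push_cast
      rw [← Complex.ofReal_add, hab]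
      simp
  ext ρ
  constructor
  · rintro ⟨hρd, hρtr⟩
    rw [part2] at hρd
    obtain ⟨A, hA, rfl⟩ := hρd
    set t : Fin m → ℝ := fun i => ((A i).trace).re with ht
    have htrace_i : ∀ i, (A i).trace = ((t i : ℝ) : ℂ) := fun i => herm_trace_real (hA i).2.1
    have htnn : ∀ i, 0 ≤ t i := by
      intro i
      have := (hA i).2.2 1 (h1 i) Matrix.PosSemidef.one
      rwa [mul_one] at this
    have hsum : ∑ i, t i = 1 := by
      rw [trace_blockDiagonal'] at hρtr
      have : ((∑ i, t i : ℝ) : ℂ) = 1 := by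
        push_cast
        rw [← hρtr]
        exact Finset.sum_congr rfl fun i _ => (htrace_i i).symm
      exact_mod_cast this
    have hzero : ∀ i, t i = 0 → A i = 0 := by
      intro i hti
      exact dual_trace_zero (R i) (h1 i) (hA i).1 (hA i).2.1 (hA i).2.2 hti
    set s : Finset (Fin m) := Finset.univ.filter (fun i => t i ≠ 0) with hs
    have hsum' : ∑ i ∈ s, t i = 1 := by
      rw [hs, Finset.sum_filter_ne_zero]
      exact hsum
    have hz : ∀ i ∈ s, Matrix.blockDiagonal' (Pi.single i ((t i)⁻¹ • A i)) ∈
        (⋃ i, (fun ρ => Matrix.blockDiagonal' (Pi.single i ρ)) ''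
          dmat (R i : Set (Matrix (Fin (n i)) (Fin (n i)) ℂ))) := by
      intro i hi
      have hti : t i ≠ 0 := (Finset.mem_filter.mp hi).2
      have htpos : 0 < t i := lt_of_le_of_ne (htnn i) (Ne.symm hti)
      refine Set.mem_iUnion.mpr ⟨i, Set.mem_image_of_mem _ ?_⟩
      constructor
      · exact dualCone_smul (R i) (hA i) (inv_nonneg.mpr (le_of_lt htpos))
      · rw [trace_smul, htrace_i i, Complex.real_smul, ← Complex.ofReal_mul,
          inv_mul_cancel₀ hti, Complex.ofReal_one]
    have hcm := Finset.centerMass_mem_convexHull s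
      (fun i _ => htnn i) (by rw [hsum']; norm_num)
      hz
    rwa [Finset.centerMass_eq_of_sum_1 _ _ hsum', show ∑ i ∈ s, t i •
        Matrix.blockDiagonal' (Pi.single i ((t i)⁻¹ • A i)) = Matrix.blockDiagonal' A
      from ?_] at hcm
    have hterm : ∀ i ∈ s, t i • Matrix.blockDiagonal' (Pi.single i ((t i)⁻¹ • A i)) =
        Matrix.blockDiagonal' (Pi.single i (A i) :
          ∀ j, Matrix (Fin (n j)) (Fin (n j)) ℂ) := by
      intro i hi
      have hti : t i ≠ 0 := (Finset.mem_filter.mp hi).2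
      rw [← blockDiagonal'_smul, ← Pi.single_smul, smul_inv_smul₀ hti]
    rw [Finset.sum_congr rfl hterm]
    rw [Finset.sum_subset (Finset.filter_subset _ _) (fun i _ hi => by
      have : t i = 0 := by simpa [hs] using hi
      rw [hzero i this, Pi.single_zero, blockDiagonal'_zero])]
    have hms := map_sum (blockDiagonal'AddMonoidHom (fun i => Fin (n i))
      (fun i => Fin (n i)) ℂ) (fun x => Pi.single x (A x)) Finset.univ
    simp only [blockDiagonal'AddMonoidHom_apply] at hms
    rw [← hms, Finset.univ_sum_single]
  · intro hρ
    refine convexHull_min ?_ hconv hρ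
    exact Set.iUnion_subset fun i => Set.image_subset_iff.mpr fun x hx => hDsub i x hx
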